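/- arXiv:1607.07798 — 8 statements merged into one kernel-verified Lean document; each statement's English description precedes it below -/
import Mathlib

section
/- Let F_q be a finite field with q elements and let g ∈ F_q[X] be a monic irreducible polynomial of degree 2k with k ≥ 1 whose constant coefficient is nonzero, and which is self-reciprocal, i.e. reverse(g) = g(0) · g. Then in the field K = F_q[X]/(g) (i.e. AdjoinRoot g), the inverse of the image α of X satisfies α⁻¹ = α^(q^k). -/
open Polynomial

/-- For a monic irreducible self-reciprocal polynomial `g` of degree `2k` (`k ≥ 1`)
with nonzero constant coefficient over the finite field `F` with `q` elements,
the inverse of the root `α` of `g` in `F[X]/(g)` equals `α ^ (q ^ k)`. -/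
theorem inv_root_eq_pow_of_selfReciprocal
    (F : Type) [Field F] [Fintype F] (q : ℕ) (hq : Fintype.card F = q)
    (g : Polynomial F) [hirr : Fact (Irreducible g)] (hmonic : g.Monic)
    (k : ℕ) (hk : 1 ≤ k) (hdeg : g.natDegree = 2 * k)
    (h0 : g.coeff 0 ≠ 0)
    (hsr : g.reverse = Polynomial.C (g.coeff 0) * g) :
    (AdjoinRoot.root g)⁻¹ = (AdjoinRoot.root g) ^ (q ^ k) := by
  classical
  have hq1 : 1 < q := hq ▸ Fintype.one_lt_card
  set K := AdjoinRoot g with hK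
  set α : K := AdjoinRoot.root g with hα
  have hgne : g ≠ 0 := hmonic.ne_zero
  have haroot : (aeval α) g = 0 := by
    rw [aeval_def, AdjoinRoot.algebraMap_eq]
    exact AdjoinRoot.eval₂_root g
  -- α ≠ 0
  have hα0 : α ≠ 0 := by
    intro h
    apply h0
    have := haroot
    rw [h, aeval_def, eval₂_at_zero] at this
    exact (_root_.map_eq_zero (algebraMap F K)).mp this
  -- finiteness of K
  haveI : Module.Finite F K := (AdjoinRoot.powerBasis' hmonic).finite
  haveI : Finite K := Module.finite_of_finite F
  haveI : Fintype K := Fintype.ofFinite K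
  have hcard : Fintype.card K = q ^ (2 * k) := by
    rw [Module.card_fintype (AdjoinRoot.powerBasis' hmonic).basis, hq]
    congr 1
    simp [AdjoinRoot.powerBasis', hdeg]
  -- every element of K satisfies x ^ q ^ (2k) = x
  have hfix2k : ∀ x : K, x ^ q ^ (2 * k) = x := by
    intro x
    rw [← hcard]
    exact FiniteField.pow_card x
  -- key lemma: if α is fixed by the m-th power Frobenius with 0 < m, then 2k ≤ m
  have hbig : ∀ m : ℕ, 0 < m → α ^ q ^ m = α → 2 * k ≤ m := by
    intro m hm hfixα
    -- char p setup
    obtain ⟨p, hp⟩ := CharP.exists F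
    haveI : CharP F p := hp
    haveI : Fact p.Prime := ⟨CharP.char_is_prime F p⟩
    obtain ⟨n, hpn, hcardF⟩ := FiniteField.card F p
    haveI : CharP K p := charP_of_injective_algebraMap (algebraMap F K).injective p
    have hqp : q = p ^ (n : ℕ) := by rw [← hq, hcardF]
    -- the Frobenius power as an F-algebra hom
    have hcomm : ∀ c : F, (iterateFrobenius K p ((n : ℕ) * m)) (algebraMap F K c)
        = algebraMap F K c := by
      intro c
      rw [iterateFrobenius_def, ← map_pow]
      congr 1
      calc c ^ p ^ ((n : ℕ) * m) = c ^ q ^ m := by rw [hqp, ← pow_mul]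
        _ = c := by rw [← hq]; exact FiniteField.pow_card_pow m c
    let ψ : K →ₐ[F] K := { iterateFrobenius K p ((n : ℕ) * m) with commutes' := hcomm }
    have hψ : ∀ x : K, ψ x = x ^ q ^ m := by
      intro x
      show (iterateFrobenius K p ((n : ℕ) * m)) x = _
      rw [iterateFrobenius_def, hqp, ← pow_mul]
    -- the equalizer of ψ and the identity contains α, hence is everything
    have htop : Algebra.adjoin F ({α} : Set K) ≤ AlgHom.equalizer ψ (AlgHom.id F K) := by
      apply Algebra.adjoin_le
      intro x hx
      rw [Set.mem_singleton_iff] at hx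
      subst hx
      show ψ α = α
      rw [hψ]; exact hfixα
    rw [AdjoinRoot.adjoinRoot_eq_top] at htop
    have hall : ∀ x : K, x ^ q ^ m = x := by
      intro x
      have hx : x ∈ AlgHom.equalizer ψ (AlgHom.id F K) := htop (by trivial)
      have := (AlgHom.mem_equalizer ψ (AlgHom.id F K) x).mp hx
      rw [hψ] at this
      exact this
    -- counting roots of X^(q^m) - X
    have hne : (X ^ q ^ m - X : K[X]) ≠ 0 :=
      FiniteField.X_pow_card_pow_sub_X_ne_zero K hm.ne' hq1
    have hdegP : (X ^ q ^ m - X : K[X]).natDegree = q ^ m :=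
      FiniteField.X_pow_card_pow_sub_X_natDegree_eq K hm.ne' hq1
    have hsub : (Finset.univ : Finset K) ⊆ (X ^ q ^ m - X : K[X]).roots.toFinset := by
      intro x _
      rw [Multiset.mem_toFinset, mem_roots hne]
      simp only [IsRoot.def, eval_sub, eval_pow, eval_X, hall x, sub_self]
    have hle : Fintype.card K ≤ q ^ m := by
      calc Fintype.card K = (Finset.univ : Finset K).card := rfl
        _ ≤ (X ^ q ^ m - X : K[X]).roots.toFinset.card := Finset.card_le_card hsub
        _ ≤ Multiset.card (X ^ q ^ m - X : K[X]).roots := Multiset.toFinset_card_le _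
        _ ≤ (X ^ q ^ m - X : K[X]).natDegree := (X ^ q ^ m - X : K[X]).card_roots'
        _ = q ^ m := hdegP
    rw [hcard] at hle
    exact (Nat.pow_le_pow_iff_right hq1).mp hle
  -- all Frobenius conjugates of α are roots of g
  have haevalpow : ∀ x : K, aeval (x ^ q) g = (aeval x g) ^ q := by
    intro x
    have h1 : expand F q g = g ^ q := by rw [← hq]; exact FiniteField.expand_card g
    rw [← expand_aeval q g x, h1, map_pow]
  have hroots : ∀ i : ℕ, aeval (α ^ q ^ i) g = 0 := by
    intro i
    induction i with
    | zero => simpa using haroot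
    | succ i ih =>
      have : α ^ q ^ (i + 1) = (α ^ q ^ i) ^ q := by rw [← pow_mul, pow_succ]
      rw [this, haevalpow, ih, zero_pow (by omega : q ≠ 0)]
  -- distinctness of Frobenius conjugates
  have haux : ∀ i j : ℕ, i < 2 * k → j < 2 * k → i < j → α ^ q ^ i = α ^ q ^ j → False := by
    intro i j hi hj hlt hij'
    have e1 : α ^ q ^ (i + (2 * k - j)) = α := by
      calc α ^ q ^ (i + (2 * k - j)) = (α ^ q ^ i) ^ q ^ (2 * k - j) := by
            rw [← pow_mul, ← pow_add]
        _ = (α ^ q ^ j) ^ q ^ (2 * k - j) := by rw [hij']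
        _ = α ^ q ^ (2 * k) := by rw [← pow_mul, ← pow_add]; congr 2; omega
        _ = α := hfix2k α
    have := hbig (i + (2 * k - j)) (by omega) e1
    omega
  have hinj : Set.InjOn (fun i => α ^ q ^ i) ↑(Finset.range (2 * k)) := by
    intro i hi j hj hij
    simp only [Finset.coe_range, Set.mem_Iio] at hi hj
    have hij' : α ^ q ^ i = α ^ q ^ j := hij
    rcases lt_trichotomy i j with h | h | h
    · exact (haux i j hi hj h hij').elim
    · exact h
    · exact (haux j i hj hi h hij'.symm).elim
  set g' : K[X] := g.map (algebraMap F K) with hg'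
  have hg'ne : g' ≠ 0 := (hmonic.map (algebraMap F K)).ne_zero
  have hg'deg : g'.natDegree = 2 * k := by rw [hg', natDegree_map, hdeg]
  set S : Finset K := (Finset.range (2 * k)).image (fun i => α ^ q ^ i) with hS
  have hScard : S.card = 2 * k := by
    rw [hS, Finset.card_image_of_injOn hinj, Finset.card_range]
  have hSsub : S ⊆ g'.roots.toFinset := by
    intro x hx
    rw [hS, Finset.mem_image] at hx
    obtain ⟨i, _, rfl⟩ := hx
    rw [Multiset.mem_toFinset, mem_roots hg'ne, IsRoot.def, hg', eval_map, ← aeval_def]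
    exact hroots i
  have hTcard : g'.roots.toFinset.card ≤ 2 * k := by
    calc g'.roots.toFinset.card ≤ Multiset.card g'.roots := Multiset.toFinset_card_le _
      _ ≤ g'.natDegree := g'.card_roots'
      _ = 2 * k := hg'deg
  have hSeq : S = g'.roots.toFinset :=
    Finset.eq_of_subset_of_card_le hSsub (by rw [hScard]; exact hTcard)
  -- α⁻¹ is a root of g
  have hinvroot : aeval (α⁻¹) g = 0 := by
    have hrevα : eval₂ (algebraMap F K) α g.reverse = 0 := by
      rw [hsr, eval₂_mul, eval₂_C, ← aeval_def, haroot, mul_zero]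
    haveI : Invertible (α⁻¹) := invertibleOfNonzero (inv_ne_zero hα0)
    have hiff := Polynomial.eval₂_reverse_eq_zero_iff (algebraMap F K) (α⁻¹) g
    rw [invOf_eq_inv (α⁻¹), inv_inv] at hiff
    rw [aeval_def]
    exact hiff.mp hrevα
  have hmem : α⁻¹ ∈ S := by
    rw [hSeq, Multiset.mem_toFinset, mem_roots hg'ne, IsRoot.def, hg', eval_map, ← aeval_def]
    exact hinvroot
  rw [hS, Finset.mem_image] at hmem
  obtain ⟨j, hjmem, hj⟩ := hmem
  rw [Finset.mem_range] at hjmem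
  have hj' : α⁻¹ = α ^ q ^ j := hj.symm
  -- j ≠ 0
  have hj0 : j ≠ 0 := by
    rintro rfl
    rw [pow_zero, pow_one] at hj'
    have hsq : α * α = 1 := by
      nth_rewrite 2 [← hj']
      exact mul_inv_cancel₀ hα0
    have hmin : minpoly F α = g := by
      rw [hα, AdjoinRoot.minpoly_root hgne, hmonic.leadingCoeff, inv_one, map_one, mul_one]
    have hdvd : g ∣ (X - 1) * (X + 1) := by
      rw [← hmin]
      apply minpoly.dvd
      rw [map_mul, map_sub, map_add, aeval_X, map_one]
      have : (α - 1) * (α + 1) = α * α - 1 := by ring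
      rw [this, hsq, sub_self]
    have hprime : Prime g := UniqueFactorizationMonoid.irreducible_iff_prime.mp hirr.out
    have hle1 : g.natDegree ≤ 1 := by
      rcases hprime.2.2 _ _ hdvd with h | h
      · have hne1 : (X - 1 : F[X]) ≠ 0 := by
          have : (X - 1 : F[X]) = X - C 1 := by rw [map_one]
          rw [this]; exact X_sub_C_ne_zero 1
        have := Polynomial.natDegree_le_of_dvd h hne1
        calc g.natDegree ≤ (X - 1 : F[X]).natDegree := this
          _ ≤ 1 := by
            have : (X - 1 : F[X]) = X - C 1 := by rw [map_one]
            rw [this, natDegree_X_sub_C]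
      · have hne1 : (X + 1 : F[X]) ≠ 0 := by
          have : (X + 1 : F[X]) = X + C 1 := by rw [map_one]
          rw [this]; exact X_add_C_ne_zero 1
        have := Polynomial.natDegree_le_of_dvd h hne1
        calc g.natDegree ≤ (X + 1 : F[X]).natDegree := this
          _ ≤ 1 := by
            have : (X + 1 : F[X]) = X + C 1 := by rw [map_one]
            rw [this, natDegree_X_add_C]
    omega
  -- α is fixed by Frobenius^(2j)
  have h2j : α ^ q ^ (2 * j) = α := by
    calc α ^ q ^ (2 * j) = (α ^ q ^ j) ^ q ^ j := by rw [← pow_mul, ← pow_add, two_mul]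
      _ = (α⁻¹) ^ q ^ j := by rw [hj]
      _ = (α ^ q ^ j)⁻¹ := by rw [inv_pow]
      _ = (α⁻¹)⁻¹ := by rw [hj]
      _ = α := inv_inv α
  have hjk : k ≤ j := by
    have := hbig (2 * j) (by omega) h2j
    omega
  have hjk2 : j ≤ k := by
    by_contra hlt
    push_neg at hlt
    have e : α ^ q ^ (2 * j - 2 * k) = α := by
      calc α ^ q ^ (2 * j - 2 * k) = (α ^ q ^ (2 * k)) ^ q ^ (2 * j - 2 * k) := by
            rw [hfix2k]
        _ = α ^ q ^ (2 * j) := by rw [← pow_mul, ← pow_add]; congr 2; omega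
        _ = α := h2j
    have := hbig (2 * j - 2 * k) (by omega) e
    omega
  have hjeq : j = k := le_antisymm hjk2 hjk
  rw [hj', hjeq]
end

section
/- Let F_q be a finite field and let g ∈ F_q[X] be a monic irreducible polynomial of degree at least 2 which is self-reciprocal, i.e. g* = g(0)⁻¹ · reverse(g) equals g. Then the degree of g is even. -/
open Polynomial

/-- A monic irreducible self-reciprocal polynomial of degree at least 2
over a finite field has even degree. -/
theorem even_natDegree_of_selfReciprocal
    (F : Type) [Field F] [Fintype F] (g : Polynomial F)
    (hmonic : g.Monic) (hirr : Irreducible g) (hdeg : 2 ≤ g.natDegree)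
    (hsr : Polynomial.C (g.coeff 0)⁻¹ * g.reverse = g) :
    Even g.natDegree := by
  have hnoroot : ∀ a : F, ¬ g.IsRoot a := by
    intro a ha
    obtain ⟨u, hu⟩ := dvd_iff_isRoot.mpr ha
    rcases hirr.isUnit_or_isUnit hu with h | h
    · exact (not_isUnit_X_sub_C a) h
    · have h1 : g.natDegree = 1 := by
        rw [hu, natDegree_mul (X_sub_C_ne_zero a) h.ne_zero, natDegree_X_sub_C,
          natDegree_eq_zero_of_isUnit h]
      omega
  have h0 : g.coeff 0 ≠ 0 := by
    intro h
    exact hnoroot 0 (by simpa [IsRoot, coeff_zero_eq_eval_zero] using h)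
  have hc0 : (g.coeff 0)⁻¹ = g.coeff 0 := by
    have := congrArg (fun p => Polynomial.coeff p 0) hsr
    simpa [coeff_zero_reverse, hmonic.leadingCoeff] using this
  have hsq : g.coeff 0 = 1 ∨ g.coeff 0 = -1 := by
    have : g.coeff 0 * g.coeff 0 = 1 := by
      nth_rewrite 1 [← hc0]; exact inv_mul_cancel₀ h0
    exact mul_self_eq_one_iff.mp this
  by_contra hcon
  have hodd : Odd g.natDegree := Nat.odd_iff.mpr (Nat.not_even_iff.mp hcon)
  by_cases h2 : (-1 : F) = 1
  · -- characteristic 2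
    have htwo : (2 : F) = 0 := by linear_combination -h2
    have hone : g.coeff 0 = 1 := by
      rcases hsq with h | h
      · exact h
      · rw [h, h2]
    have hgr : g.reverse = g := by rw [hone] at hsr; simpa using hsr
    apply hnoroot 1
    have heval : g.eval 1 = ∑ i ∈ Finset.range (g.natDegree + 1), g.coeff i := by
      rw [eval_eq_sum_range]; simp
    have hpal : ∀ i, i ≤ g.natDegree → g.coeff i = g.coeff (g.natDegree - i) := by
      intro i hi
      conv_lhs => rw [← hgr]
      rw [coeff_reverse, revAt_le hi]
    have hzero : ∑ i ∈ Finset.range (g.natDegree + 1), g.coeff i = 0 := by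
      apply Finset.sum_involution (fun a _ => g.natDegree - a)
      · intro a ha
        have ha' : a ≤ g.natDegree := by
          simpa [Nat.lt_succ_iff] using Finset.mem_range.mp ha
        rw [← hpal a ha', ← two_mul, htwo, zero_mul]
      · intro a ha _
        have ha' : a ≤ g.natDegree := by
          simpa [Nat.lt_succ_iff] using Finset.mem_range.mp ha
        obtain ⟨k, hk⟩ := hodd
        omega
      · intro a ha
        simp only [Finset.mem_range] at *
        omega
      · intro a ha
        have ha' : a ≤ g.natDegree := by
          simpa [Nat.lt_succ_iff] using Finset.mem_range.mp ha
        omega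
    rw [IsRoot, heval, hzero]
  · -- characteristic ≠ 2
    have hne2 : (2 : F) ≠ 0 := fun h => h2 (by linear_combination -h)
    rcases hsq with hone | hneg
    · have hgr : g.reverse = g := by rw [hone] at hsr; simpa using hsr
      haveI : Invertible (-1 : F) := ⟨-1, by ring, by ring⟩
      have hinv : (⅟ (-1 : F)) = -1 := invOf_eq_right_inv (by ring)
      have hev := eval₂_reverse_mul_pow (RingHom.id F) (-1 : F) g
      rw [hinv, hgr, Odd.neg_one_pow hodd] at hev
      have hev' : g.eval (-1) * (-1) = g.eval (-1) := hev
      have : g.eval (-1) * 2 = 0 := by linear_combination -hev'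
      exact hnoroot (-1) ((mul_eq_zero.mp this).resolve_right hne2)
    · haveI : Invertible (1 : F) := invertibleOne
      have hrev1' : g.reverse.eval 1 = g.eval 1 := by
        have h := eval₂_reverse_mul_pow (RingHom.id F) (1 : F) g
        rw [invOf_one] at h
        simpa using h
      have hev := congrArg (fun p => Polynomial.eval 1 p) hsr
      simp only [eval_mul, eval_C, hrev1', hneg, inv_neg, inv_one] at hev
      have : g.eval 1 * 2 = 0 := by linear_combination -hev
      exact hnoroot 1 ((mul_eq_zero.mp this).resolve_right hne2)
end

section
/- Let F_q be a finite field, n a positive integer, and f, g ∈ F_q[X] polynomials with X^n − 1 = g · f. Then the cyclic code C_n(g) is permutation equivalent to the Euclidean dual of the cyclic code C_n(f): there exists a permutation σ of Fin n such that {(fun i => v (σ i)) | v ∈ C_n(g)} = (C_n(f))^⊥. -/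
open Polynomial

/-- The cyclic code of length `n` generated by `g`:
`{v : Fin n → F | g ∣ ∑ i, v i • X^i}`. -/
def cyclicCode (F : Type) [Field F] (n : ℕ) (g : Polynomial F) :
    Submodule F (Fin n → F) where
  carrier := {v | g ∣ ∑ i : Fin n, Polynomial.C (v i) * X ^ (i : ℕ)}
  zero_mem' := by simp
  add_mem' := by
    intro a b ha hb
    have h : ∑ i : Fin n, Polynomial.C ((a + b) i) * X ^ (i : ℕ) =
        (∑ i : Fin n, Polynomial.C (a i) * X ^ (i : ℕ)) +
          ∑ i : Fin n, Polynomial.C (b i) * X ^ (i : ℕ) := by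
      rw [← Finset.sum_add_distrib]
      simp [add_mul]
    simp only [Set.mem_setOf_eq] at *
    rw [h]
    exact dvd_add ha hb
  smul_mem' := by
    intro c a ha
    have h : ∑ i : Fin n, Polynomial.C ((c • a) i) * X ^ (i : ℕ) =
        Polynomial.C c * ∑ i : Fin n, Polynomial.C (a i) * X ^ (i : ℕ) := by
      rw [Finset.mul_sum]
      simp [mul_assoc]
    simp only [Set.mem_setOf_eq] at *
    rw [h]
    exact Dvd.dvd.mul_left ha _

section aux
variable {F : Type} [Field F] {n : ℕ}

noncomputable def psiP (v : Fin n → F) : Polynomial F := ∑ i : Fin n, C (v i) * X ^ (i : ℕ)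

lemma mem_cyclicCode {g : Polynomial F} {v : Fin n → F} :
    v ∈ cyclicCode F n g ↔ g ∣ psiP v := Iff.rfl

lemma coeff_psiP (v : Fin n → F) (k : ℕ) :
    (psiP v).coeff k = if h : k < n then v ⟨k, h⟩ else 0 := by
  rw [psiP, finset_sum_coeff]
  simp only [coeff_C_mul, coeff_X_pow, mul_ite, mul_one, mul_zero]
  split
  · next hlt =>
    rw [Finset.sum_eq_single (⟨k, hlt⟩ : Fin n)]
    · simp
    · intro j _ hj
      exact if_neg (fun hk => hj (Fin.ext hk.symm))
    · intro hmem; exact absurd (Finset.mem_univ _) hmem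
  · next hge =>
    apply Finset.sum_eq_zero
    intro j _
    exact if_neg (fun hk => hge (lt_of_le_of_lt (le_of_eq hk) j.isLt))

lemma natDegree_psiP (v : Fin n → F) : (psiP v).natDegree ≤ n - 1 := by
  rw [natDegree_le_iff_coeff_eq_zero]
  intro N hN
  rw [coeff_psiP, dif_neg (by omega)]

lemma psiP_coeffvec (p : Polynomial F) (hp : p.natDegree < n) :
    psiP (fun i : Fin n => p.coeff (i : ℕ)) = p := by
  ext k
  rw [coeff_psiP]
  split
  · rfl
  · next hge =>
    exact (coeff_eq_zero_of_natDegree_lt (lt_of_lt_of_le hp (le_of_not_gt hge))).symm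

lemma inner_eq (v w : Fin n → F) :
    ∑ i, v i * w i = (psiP v * psiP (fun i => w (Fin.rev i))).coeff (n - 1) := by
  have key : ∀ (a b : F) (i j : ℕ),
      (C a * X ^ i) * (C b * X ^ j) = C (a * b) * X ^ (i + j) := by
    intro a b i j; rw [C_mul, pow_add]; ring
  rw [psiP, psiP, Finset.sum_mul_sum]
  simp only [key]
  rw [finset_sum_coeff]
  simp only [finset_sum_coeff, coeff_C_mul, coeff_X_pow, mul_ite, mul_one, mul_zero]
  refine Finset.sum_congr rfl fun i _ => ?_
  rw [Finset.sum_eq_single (Fin.rev i)]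
  · rw [Fin.rev_rev, if_pos (by have := i.isLt; rw [Fin.val_rev]; omega)]
  · intro j _ hj
    refine if_neg fun hk => hj ?_
    have hi := i.isLt; have hjlt := j.isLt
    exact Fin.ext (by rw [Fin.val_rev]; omega)
  · intro hmem; exact absurd (Finset.mem_univ _) hmem

end aux


/-- If `X^n - 1 = g · f`, then the cyclic code generated by `g` is permutation equivalent
to the Euclidean dual of the cyclic code generated by `f`. -/
theorem cyclicCode_perm_equiv_dual
    (F : Type) [Field F] [Fintype F] (n : ℕ) (hn : 0 < n)
    (f g : Polynomial F) (h : X ^ n - 1 = g * f) :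
    ∃ σ : Equiv.Perm (Fin n),
      (fun v : Fin n → F => fun i : Fin n => v (σ i)) ''
          (cyclicCode F n g : Set (Fin n → F)) =
        {w : Fin n → F | ∀ v ∈ cyclicCode F n f, ∑ i, v i * w i = 0} := by
  have hm : (X ^ n - 1 : Polynomial F).Monic := by
    have := monic_X_pow_sub_C (1 : F) hn.ne'
    simpa using this
  have hdegm : (X ^ n - 1 : Polynomial F).natDegree = n := by
    have : ((X : Polynomial F) ^ n - C 1).natDegree = n := natDegree_X_pow_sub_C
    simpa using this
  have hdegm' : (X ^ n - 1 : Polynomial F).degree = (n : WithBot ℕ) := by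
    have : ((X : Polynomial F) ^ n - C 1).degree = (n : WithBot ℕ) := degree_X_pow_sub_C hn 1
    simpa using this
  have hf0 : f ≠ 0 := by
    intro hf
    exact hm.ne_zero (by rw [h, hf, mul_zero])
  refine ⟨Fin.revPerm, ?_⟩
  ext w
  simp only [Set.mem_image, SetLike.mem_coe, Set.mem_setOf_eq]
  constructor
  · rintro ⟨v, hv, rfl⟩
    intro u hu
    have e1 := inner_eq u (fun i => v (Fin.revPerm i))
    simp only [Fin.revPerm_apply, Fin.rev_rev] at e1 ⊢
    rw [e1]
    obtain ⟨q, hq⟩ : (X ^ n - 1 : Polynomial F) ∣ psiP u * psiP v := by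
      rw [h, mul_comm g f]
      exact mul_dvd_mul (mem_cyclicCode.mp hu) (mem_cyclicCode.mp hv)
    rw [hq]
    rcases eq_or_ne q 0 with rfl | hq0
    · simp
    have hdeg : ((X ^ n - 1 : Polynomial F) * q).natDegree ≤ (n - 1) + (n - 1) := by
      rw [← hq]
      exact le_trans natDegree_mul_le (add_le_add (natDegree_psiP u) (natDegree_psiP v))
    rw [natDegree_mul hm.ne_zero hq0, hdegm] at hdeg
    have hqdeg : q.natDegree < n - 1 := by omega
    rw [sub_mul, one_mul, coeff_sub, mul_comm, coeff_mul_X_pow',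
      if_neg (by omega : ¬ n ≤ n - 1), coeff_eq_zero_of_natDegree_lt hqdeg, sub_zero]
  · intro hw
    refine ⟨fun i => w (Fin.rev i), ?_, ?_⟩
    swap
    · funext i
      simp [Fin.rev_rev]
    rw [mem_cyclicCode]
    set u : Polynomial F := psiP (fun i => w (Fin.rev i)) with hu
    rcases eq_or_ne u 0 with hu0 | hu0
    · rw [hu0]; exact dvd_zero g
    set d := f.natDegree with hd
    set P := f * u with hP
    have hP0 : P ≠ 0 := mul_ne_zero hf0 hu0
    have hPu : P.natDegree ≤ d + (n - 1) := by
      rw [hP, natDegree_mul hf0 hu0]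
      exact Nat.add_le_add_left (natDegree_psiP _) d
    have hPk : ∀ k, d ≤ k → k ≤ n - 1 → P.coeff k = 0 := by
      intro k hdk hkn
      have hjdeg : (f * X ^ (n - 1 - k)).natDegree < n := by
        rw [natDegree_mul hf0 (pow_ne_zero (n - 1 - k) X_ne_zero), natDegree_X_pow]
        omega
      have hmem : (fun i : Fin n => (f * X ^ (n - 1 - k)).coeff (i : ℕ)) ∈ cyclicCode F n f := by
        rw [mem_cyclicCode, psiP_coeffvec _ hjdeg]
        exact dvd_mul_right f _
      have hv' := hw _ hmem
      rw [inner_eq, psiP_coeffvec _ hjdeg, ← hu, mul_right_comm, coeff_mul_X_pow',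
        if_pos (by omega : n - 1 - k ≤ n - 1)] at hv'
      rw [hP]
      have hidx : n - 1 - (n - 1 - k) = k := by omega
      rwa [hidx] at hv'
    set s := P /ₘ (X ^ n - 1) with hs
    set r := P %ₘ (X ^ n - 1) with hr
    have hrs : r = P - (X ^ n - 1) * s := modByMonic_eq_sub_mul_div P (X ^ n - 1)
    have hfr : f ∣ r := by
      rw [hrs, hP, h]
      exact ⟨u - g * s, by ring⟩
    have hrdeg : r.degree < (n : WithBot ℕ) := by
      have := degree_modByMonic_lt P hm
      rwa [hdegm'] at this
    have hrk : ∀ k, d ≤ k → r.coeff k = 0 := by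
      intro k hdk
      rcases lt_or_ge k n with hkn | hkn
      swap
      · exact coeff_eq_zero_of_degree_lt (lt_of_lt_of_le hrdeg (by exact_mod_cast hkn))
      rcases eq_or_ne s 0 with hs0 | hs0
      · rw [hrs, hs0, mul_zero, sub_zero]
        exact hPk k hdk (by omega)
      have hPdeg : n ≤ P.natDegree := by
        by_contra hc
        push_neg at hc
        apply hs0
        rw [hs, divByMonic_eq_zero_iff hm, hdegm', degree_eq_natDegree hP0]
        exact_mod_cast hc
      have hsdeg : s.natDegree = P.natDegree - n := by
        rw [hs, natDegree_divByMonic P hm, hdegm]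
      have hscoeff : s.coeff k = 0 :=
        coeff_eq_zero_of_natDegree_lt (by omega)
      rw [hrs, coeff_sub, sub_mul, one_mul, coeff_sub,
        mul_comm ((X : Polynomial F) ^ n) s, coeff_mul_X_pow',
        if_neg (not_le.mpr hkn), hPk k hdk (by omega), hscoeff]
      ring
    rcases eq_or_ne r 0 with hr0 | hr0
    swap
    · exfalso
      have h1 : r.natDegree < d := by
        by_contra hc
        push_neg at hc
        exact (leadingCoeff_ne_zero.mpr hr0) (hrk _ hc)
      have h2 : r.degree < f.degree := by
        rw [degree_eq_natDegree hr0, degree_eq_natDegree hf0]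
        exact_mod_cast h1
      exact hr0 (eq_zero_of_dvd_of_degree_lt hfr h2)
    have hPs : P = (X ^ n - 1) * s := by
      have h3 := hrs
      rw [hr0] at h3
      exact (sub_eq_zero.mp h3.symm)
    have h4 : f * u = f * (g * s) := by
      rw [← hP, hPs, h]
      ring
    exact ⟨s, mul_left_cancel₀ hf0 h4⟩
end

section
/- Let F_q be a finite field, let s be an odd positive integer, and let f ∈ F_q[X] satisfy X^s − 1 = (X − 1) · f. Set n = 2s. Then both the cyclic code C_n((X − 1) · f.comp(−X)) and the cyclic code C_n((X + 1) · f) of length 2s are isodual in the monomial sense: each of these codes is monomially equivalent to its Euclidean dual. -/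
open Polynomial

/-- A code `C` of length `n` over `F` is isodual in the monomial sense if it is monomially
equivalent to its Euclidean dual. -/
def IsMonomialIsodual {F : Type} [Field F] {n : ℕ} (C : Submodule F (Fin n → F)) : Prop :=
  ∃ (σ : Equiv.Perm (Fin n)) (d : Fin n → Fˣ),
    (fun v : Fin n → F => fun i : Fin n => (d i : F) * v (σ i)) '' (C : Set (Fin n → F)) =
      {w : Fin n → F | ∀ v ∈ C, ∑ i, v i * w i = 0}


open Polynomial Module

namespace IsodualAux

variable {F : Type} [Field F]

noncomputable def toPoly {n : ℕ} (v : Fin n → F) : F[X] :=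
  ∑ i : Fin n, C (v i) * X ^ (i : ℕ)

lemma coeff_toPoly {n : ℕ} (v : Fin n → F) {j : ℕ} (hj : j < n) :
    (toPoly v).coeff j = v ⟨j, hj⟩ := by
  rw [toPoly, finset_sum_coeff, Finset.sum_eq_single (⟨j, hj⟩ : Fin n)]
  · simp
  · intro b _ hb
    have hbj : j ≠ (b : ℕ) := fun h => hb (Fin.ext h.symm)
    simp [coeff_X_pow, hbj]
  · simp

lemma toPoly_mem_degreeLT {n : ℕ} (v : Fin n → F) : toPoly v ∈ degreeLT F n := by
  refine Submodule.sum_mem _ fun i _ => ?_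
  rw [mem_degreeLT]
  exact lt_of_le_of_lt (degree_C_mul_X_pow_le _ _) (by exact_mod_cast i.isLt)

lemma natDegree_toPoly_le {n : ℕ} (v : Fin n → F) : (toPoly v).natDegree ≤ n - 1 := by
  rcases eq_or_ne (toPoly v) 0 with h | h
  · simp [h]
  · have := mem_degreeLT.mp (toPoly_mem_degreeLT v)
    have hn := (natDegree_lt_iff_degree_lt h).mpr this
    omega

lemma toPoly_coeff_eq {n : ℕ} (p : F[X]) (hp : p.natDegree < n) :
    toPoly (fun i : Fin n => p.coeff i) = p := by
  conv_rhs => rw [p.as_sum_range' n hp]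
  rw [toPoly, Fin.sum_univ_eq_sum_range (fun i => C (p.coeff i) * X ^ i)]
  simp [C_mul_X_pow_eq_monomial]

lemma toPoly_add {n : ℕ} (a b : Fin n → F) : toPoly (a + b) = toPoly a + toPoly b := by
  simp only [toPoly, Pi.add_apply, C_add, add_mul, Finset.sum_add_distrib]

lemma toPoly_smul {n : ℕ} (c : F) (a : Fin n → F) : toPoly (c • a) = C c * toPoly a := by
  simp only [toPoly, Pi.smul_apply, smul_eq_mul, C_mul, Finset.mul_sum, mul_assoc]

lemma mem_cyclicCode {n : ℕ} {g : F[X]} {v : Fin n → F} :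
    v ∈ cyclicCode F n g ↔ g ∣ toPoly v := Iff.rfl

noncomputable def genMap (g : F[X]) (n k : ℕ) : (Fin k → F) →ₗ[F] (Fin n → F) where
  toFun c := fun i => (g * toPoly c).coeff i
  map_add' a b := by
    funext i
    simp [toPoly_add, mul_add]
  map_smul' c a := by
    funext i
    simp only [toPoly_smul, RingHom.id_apply, Pi.smul_apply, smul_eq_mul]
    rw [mul_left_comm, coeff_C_mul]

lemma genMap_apply (g : F[X]) (n k : ℕ) (c : Fin k → F) (i : Fin n) :
    genMap g n k c i = (g * toPoly c).coeff i := rfl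

lemma toPoly_eq_zero_of_eq_zero {k : ℕ} (hk : k = 0) (c : Fin k → F) : toPoly c = 0 := by
  subst hk; simp [toPoly]

lemma genMap_injective {g : F[X]} (hg : g ≠ 0) {n : ℕ} (hdeg : g.natDegree ≤ n) :
    Function.Injective (genMap g n (n - g.natDegree)) := by
  rw [← LinearMap.ker_eq_bot]
  rw [Submodule.eq_bot_iff]
  intro c hc
  rw [LinearMap.mem_ker] at hc
  have htc : toPoly c = 0 := by
    by_contra h
    have hne : g * toPoly c ≠ 0 := mul_ne_zero hg h
    have hlt : (g * toPoly c).natDegree < n := by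
      have := natDegree_mul hg h
      have h2 := natDegree_toPoly_le c
      have h3 : 0 < n - g.natDegree := by
        rcases Nat.eq_zero_or_pos (n - g.natDegree) with h0 | h0
        · exact absurd (toPoly_eq_zero_of_eq_zero h0 c) h
        · exact h0
      omega
    apply hne
    ext j
    rcases lt_or_ge j n with hj | hj
    · simpa [genMap_apply] using congrFun hc ⟨j, hj⟩
    · simp [coeff_eq_zero_of_natDegree_lt (lt_of_lt_of_le hlt hj)]
  funext j
  have := coeff_toPoly c j.isLt
  rw [Fin.eta] at this
  rw [← this, htc]
  simp

lemma genMap_range {g : F[X]} (hg : g ≠ 0) {n : ℕ} (hdeg : g.natDegree ≤ n) :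
    LinearMap.range (genMap g n (n - g.natDegree)) = cyclicCode F n g := by
  apply le_antisymm
  · rintro v ⟨c, rfl⟩
    rw [mem_cyclicCode]
    rcases eq_or_ne (g * toPoly c) 0 with h0 | h0
    · have : toPoly (genMap g n (n - g.natDegree) c) = 0 := by
        have : genMap g n (n - g.natDegree) c = 0 := by
          funext i; rw [genMap_apply, h0]; simp
        rw [this]
        simp [toPoly]
      rw [this]
      exact dvd_zero _
    · have hlt : (g * toPoly c).natDegree < n := by
        have h1 := natDegree_mul hg (right_ne_zero_of_mul h0)
        have h2 := natDegree_toPoly_le c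
        have h3 : 0 < n - g.natDegree := by
          rcases Nat.eq_zero_or_pos (n - g.natDegree) with hz | hz
          · exact absurd (toPoly_eq_zero_of_eq_zero hz c) (right_ne_zero_of_mul h0)
          · exact hz
        omega
      have : toPoly (genMap g n (n - g.natDegree) c) = g * toPoly c := by
        have := toPoly_coeff_eq (n := n) (g * toPoly c) hlt
        convert this using 2
        rfl
      rw [this]
      exact Dvd.intro _ rfl
  · intro v hv
    rw [mem_cyclicCode] at hv
    obtain ⟨q, hq⟩ := hv
    rcases eq_or_ne q 0 with rfl | hq0
    · have hv0 : v = 0 := by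
        funext j
        have := coeff_toPoly v j.isLt
        rw [Fin.eta] at this
        rw [← this, hq]
        simp
      rw [hv0]
      exact Submodule.zero_mem _
    · have hvne : toPoly v ≠ 0 := by rw [hq]; exact mul_ne_zero hg hq0
      have hdv : (toPoly v).natDegree < n := by
        have := natDegree_toPoly_le v
        have hn : 0 < n := by
          by_contra h
          push_neg at h
          interval_cases n
          apply hvne
          simp [toPoly]
        omega
      have hdq : q.natDegree < n - g.natDegree := by
        have := natDegree_mul hg hq0
        rw [← hq] at this
        omega
      refine ⟨fun j : Fin (n - g.natDegree) => q.coeff j, ?_⟩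
      funext i
      rw [genMap_apply, toPoly_coeff_eq q hdq, ← hq, coeff_toPoly v i.isLt, Fin.eta]

lemma finrank_cyclicCode {g : F[X]} (hg : g ≠ 0) {n : ℕ} (hdeg : g.natDegree ≤ n) :
    finrank F (cyclicCode F n g) = n - g.natDegree := by
  rw [← genMap_range hg hdeg, LinearMap.finrank_range_of_inj (genMap_injective hg hdeg)]
  simp

def dualCode {n : ℕ} (C : Submodule F (Fin n → F)) : Submodule F (Fin n → F) where
  carrier := {w | ∀ v ∈ C, ∑ i, v i * w i = 0}
  zero_mem' := by simp
  add_mem' := by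
    intro a b ha hb v hv
    have : ∀ i : Fin n, v i * (a + b) i = v i * a i + v i * b i := fun i => by
      simp [mul_add]
    rw [Finset.sum_congr rfl fun i _ => this i, Finset.sum_add_distrib, ha v hv, hb v hv,
      add_zero]
  smul_mem' := by
    intro c a ha v hv
    have : ∀ i : Fin n, v i * (c • a) i = c * (v i * a i) := fun i => by
      simp [mul_left_comm]
    rw [Finset.sum_congr rfl fun i _ => this i, ← Finset.mul_sum, ha v hv, mul_zero]

lemma mem_dualCode {n : ℕ} (C : Submodule F (Fin n → F)) (w : Fin n → F) :
    w ∈ dualCode C ↔ ∀ v ∈ C, ∑ i, v i * w i = 0 := Iff.rfl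

lemma toDual_eval {n : ℕ} (w v : Fin n → F) :
    (Pi.basisFun F (Fin n)).toDual w v = ∑ i, v i * w i := by
  set b := Pi.basisFun F (Fin n) with hb
  have hv : v = ∑ i, v i • b i := by
    have := b.sum_repr v
    simpa [hb, Pi.basisFun_repr] using this.symm
  conv_lhs => rw [hv]
  rw [map_sum]
  refine Finset.sum_congr rfl fun i _ => ?_
  rw [map_smul, Basis.toDual_apply_left, smul_eq_mul, hb, Pi.basisFun_repr]

lemma finrank_dualCode {n : ℕ} (C : Submodule F (Fin n → F)) :
    finrank F (dualCode C) + finrank F C = n := by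
  classical
  have hd : dualCode C = Submodule.comap
      ((Pi.basisFun F (Fin n)).toDualEquiv : (Fin n → F) →ₗ[F] Module.Dual F (Fin n → F))
      C.dualAnnihilator := by
    ext w
    rw [mem_dualCode, Submodule.mem_comap]
    rw [Submodule.mem_dualAnnihilator]
    constructor
    · intro h v hv
      have hteq := toDual_eval w v
      simp only [LinearEquiv.coe_coe, Basis.toDualEquiv_apply]
      rw [hteq]
      exact h v hv
    · intro h v hv
      have hteq := toDual_eval w v
      rw [← hteq]
      simp only [LinearEquiv.coe_coe, Basis.toDualEquiv_apply] at h
      exact h v hv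
  rw [hd, Submodule.comap_equiv_eq_map_symm, LinearEquiv.finrank_map_eq,
    ← (Subspace.quotEquivAnnihilator C).finrank_eq, Submodule.finrank_quotient_add_finrank]
  simp

lemma sum_mul_rev {n : ℕ} (hn : 0 < n) (v u : Fin n → F) :
    ∑ i, v i * u (Fin.rev i) = (toPoly v * toPoly u).coeff (n - 1) := by
  rw [coeff_mul, Finset.Nat.sum_antidiagonal_eq_sum_range_succ_mk]
  have hr : (n - 1).succ = n := by omega
  rw [hr]
  dsimp only
  rw [← Fin.sum_univ_eq_sum_range (fun k => (toPoly v).coeff k * (toPoly u).coeff (n - 1 - k))]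
  refine Finset.sum_congr rfl fun i _ => ?_
  have h1 : n - 1 - (i : ℕ) < n := by omega
  rw [coeff_toPoly v i.isLt, coeff_toPoly u h1, Fin.eta]
  have hrev : Fin.rev i = ⟨n - 1 - (i : ℕ), h1⟩ := by
    apply Fin.ext
    rw [Fin.val_rev]
    show n - ((i : ℕ) + 1) = n - 1 - (i : ℕ)
    omega
  rw [hrev]

lemma coeff_zero_of_dvd {n : ℕ} (hn : 0 < n) {p : F[X]} (hdvd : (X ^ n - 1) ∣ p)
    (hdeg : p.natDegree ≤ 2 * n - 2) : p.coeff (n - 1) = 0 := by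
  obtain ⟨q, rfl⟩ := hdvd
  have hXn : ((X : F[X]) ^ n - 1) ≠ 0 := by
    rw [← C_1]
    exact (monic_X_pow_sub_C (1 : F) (by omega)).ne_zero
  rcases eq_or_ne q 0 with rfl | hq
  · simp
  · have hnd : ((X : F[X]) ^ n - 1).natDegree = n := by
      rw [← C_1]
      exact natDegree_X_pow_sub_C
    have hmul := natDegree_mul hXn hq
    rw [hnd] at hmul
    have hql : q.natDegree < n - 1 := by omega
    have : ((X : F[X]) ^ n - 1) * q = q * X ^ n - q := by ring
    rw [this, coeff_sub, coeff_mul_X_pow', if_neg (by omega),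
      coeff_eq_zero_of_natDegree_lt hql, zero_sub, neg_zero]

lemma map_rev_eq_dualCode {n : ℕ} (hn : 0 < n) (g h : F[X]) (hg : g.Monic) (hh : h.Monic)
    (hgh : g * h = X ^ n - 1) :
    Submodule.map ((LinearEquiv.funCongrLeft F F (Fin.revPerm : Equiv.Perm (Fin n))
        : (Fin n → F) ≃ₗ[F] (Fin n → F)) : (Fin n → F) →ₗ[F] (Fin n → F))
      (cyclicCode F n h) = dualCode (cyclicCode F n g) := by
  have hdegsum : g.natDegree + h.natDegree = n := by
    have := natDegree_mul hg.ne_zero hh.ne_zero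
    rw [hgh, ← C_1, natDegree_X_pow_sub_C] at this
    omega
  apply Submodule.eq_of_le_of_finrank_le
  · rintro w ⟨u, hu, rfl⟩
    rw [mem_dualCode]
    intro v hv
    have happ : ∀ i : Fin n, ((LinearEquiv.funCongrLeft F F (Fin.revPerm : Equiv.Perm (Fin n))
        : (Fin n → F) ≃ₗ[F] (Fin n → F)) : (Fin n → F) →ₗ[F] (Fin n → F)) u i
        = u (Fin.rev i) := fun i => rfl
    rw [Finset.sum_congr rfl fun i _ => by rw [happ i]]
    rw [sum_mul_rev hn v u]
    apply coeff_zero_of_dvd hn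
    · rw [← hgh]
      exact mul_dvd_mul (mem_cyclicCode.mp hv) (mem_cyclicCode.mp hu)
    · calc (toPoly v * toPoly u).natDegree ≤ (toPoly v).natDegree + (toPoly u).natDegree :=
        natDegree_mul_le
      _ ≤ (n - 1) + (n - 1) := add_le_add (natDegree_toPoly_le v) (natDegree_toPoly_le u)
      _ ≤ 2 * n - 2 := by omega
  · have h1 : finrank F (Submodule.map ((LinearEquiv.funCongrLeft F F
        (Fin.revPerm : Equiv.Perm (Fin n)) : (Fin n → F) ≃ₗ[F] (Fin n → F))
        : (Fin n → F) →ₗ[F] (Fin n → F)) (cyclicCode F n h))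
        = finrank F (cyclicCode F n h) := LinearEquiv.finrank_map_eq _ _
    have h2 := finrank_cyclicCode hh.ne_zero (show h.natDegree ≤ n by omega)
    have h3 := finrank_cyclicCode hg.ne_zero (show g.natDegree ≤ n by omega)
    have h4 := finrank_dualCode (cyclicCode F n g)
    omega
lemma toPoly_negX {n : ℕ} (v : Fin n → F) :
    toPoly (fun i : Fin n => (-1 : F) ^ (i : ℕ) * v i) = (toPoly v).comp (-X) := by
  rw [toPoly, toPoly]
  simp only [Polynomial.comp, eval₂_finset_sum, eval₂_mul, eval₂_C, eval₂_X_pow]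
  refine Finset.sum_congr rfl fun i _ => ?_
  rw [C_mul, map_pow, map_neg, map_one, neg_pow (X : F[X])]
  ring

lemma dvd_comp_negX {a p : F[X]} (h : a ∣ p) : a.comp (-X) ∣ p.comp (-X) := by
  obtain ⟨c, rfl⟩ := h
  exact ⟨c.comp (-X), by rw [mul_comp]⟩

lemma comp_negX_negX (p : F[X]) : (p.comp (-X)).comp (-X) = p := by
  rw [comp_assoc, neg_comp, X_comp, neg_neg, comp_X]

lemma image_negX_cyclicCode {n : ℕ} {g h : F[X]} (hcomp : g.comp (-X) = -h) :
    (fun v : Fin n → F => fun i : Fin n => (-1 : F) ^ (i : ℕ) * v i) ''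
      (cyclicCode F n g : Set (Fin n → F)) = (cyclicCode F n h : Set (Fin n → F)) := by
  have hcomp' : h.comp (-X) = -g := by
    have := congrArg (fun p : F[X] => p.comp (-X)) hcomp
    simp only [neg_comp, comp_negX_negX] at this
    rw [eq_comm, neg_eq_iff_eq_neg] at this
    rw [← this]
  ext w
  constructor
  · rintro ⟨v, hv, rfl⟩
    have hv' : g ∣ toPoly v := mem_cyclicCode.mp hv
    show h ∣ toPoly _
    rw [toPoly_negX]
    have := dvd_comp_negX hv'
    rw [hcomp] at this
    exact (neg_dvd).mp this
  · intro hw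
    have hw' : h ∣ toPoly w := mem_cyclicCode.mp hw
    refine ⟨fun i => (-1 : F) ^ (i : ℕ) * w i, ?_, ?_⟩
    · show g ∣ toPoly _
      rw [toPoly_negX]
      have := dvd_comp_negX hw'
      rw [hcomp'] at this
      exact (neg_dvd).mp this
    · funext i
      show (-1 : F) ^ (i : ℕ) * ((-1 : F) ^ (i : ℕ) * w i) = w i
      rw [← mul_assoc, ← mul_pow]
      norm_num

lemma isodual_helper {n : ℕ} (hn : 0 < n) (g h : F[X]) (hg : g.Monic) (hh : h.Monic)
    (hgh : g * h = X ^ n - 1) (hcomp : g.comp (-X) = -h) :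
    IsMonomialIsodual (cyclicCode F n g) := by
  refine ⟨Fin.revPerm, fun i => (-1 : Fˣ) ^ ((Fin.rev i : ℕ)), ?_⟩
  have hset : {w : Fin n → F | ∀ v ∈ cyclicCode F n g, ∑ i, v i * w i = 0} =
      (dualCode (cyclicCode F n g) : Set (Fin n → F)) := rfl
  rw [hset, ← map_rev_eq_dualCode hn g h hg hh hgh, Submodule.map_coe]
  have hfun : (fun v : Fin n → F => fun i : Fin n =>
        (((-1 : Fˣ) ^ ((Fin.rev i : ℕ)) : Fˣ) : F) * v (Fin.revPerm i))
      = (fun u : Fin n → F => fun i : Fin n => u (Fin.rev i)) ∘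
        (fun v : Fin n → F => fun i : Fin n => (-1 : F) ^ (i : ℕ) * v i) := by
    funext v
    funext i
    simp [Fin.revPerm_apply]
  rw [hfun, Set.image_comp, image_negX_cyclicCode hcomp]
  rfl
end IsodualAux

open IsodualAux in
/-- If `s` is odd and `X^s - 1 = (X - 1)·f`, then the cyclic codes of length `2s` generated
by `(X - 1)·f(-X)` and by `(X + 1)·f` are both isodual. -/
theorem cyclicCode_isodual_of_odd
    (F : Type) [Field F] [Fintype F] (s : ℕ) (hs : Odd s) (hs0 : 0 < s)
    (f : Polynomial F) (hf : X ^ s - 1 = (X - 1) * f) :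
    IsMonomialIsodual (cyclicCode F (2 * s) ((X - 1) * f.comp (-X))) ∧
    IsMonomialIsodual (cyclicCode F (2 * s) ((X + 1) * f)) := by
  have hn : 0 < 2 * s := by omega
  -- X^s + 1 = (X + 1) * f.comp (-X)
  have hs1 : (X : Polynomial F) ^ s + 1 = (X + 1) * f.comp (-X) := by
    have hc := congrArg (fun p : Polynomial F => p.comp (-X)) hf
    simp only [sub_comp, pow_comp, X_comp, one_comp, mul_comp] at hc
    rw [hs.neg_pow] at hc
    linear_combination (-1 : Polynomial F) * hc
  have hprod : ((X - 1) * f.comp (-X)) * ((X + 1) * f) = X ^ (2 * s) - 1 := by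
    have h1 : ((X - 1) * f.comp (-X)) * ((X + 1) * f)
        = ((X - 1) * f) * ((X + 1) * f.comp (-X)) := by ring
    rw [h1, ← hf, ← hs1]
    rw [two_mul, pow_add]
    ring
  have hXn : ((X : Polynomial F) ^ (2 * s) - 1).Monic := by
    rw [← C_1]
    exact monic_X_pow_sub_C (1 : F) (by omega)
  have hfm : f.Monic := by
    apply Polynomial.Monic.of_mul_monic_left (monic_X_sub_C (1 : F))
    have : (X - C (1 : F)) * f = X ^ s - C 1 := by rw [C_1, ← hf]
    rw [this]
    exact monic_X_pow_sub_C (1 : F) (by omega)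
  have hg2 : ((X + 1) * f).Monic := by
    have : ((X : Polynomial F) + 1) = X + C 1 := by rw [C_1]
    rw [this]
    exact (monic_X_add_C (1 : F)).mul hfm
  have hg1 : ((X - 1) * f.comp (-X)).Monic := by
    apply Polynomial.Monic.of_mul_monic_left hg2
    rw [mul_comm, hprod]
    exact hXn
  have hcomp1 : ((X - 1) * f.comp (-X)).comp (-X) = -((X + 1) * f) := by
    rw [mul_comp, sub_comp, X_comp, one_comp, comp_negX_negX]
    ring
  have hcomp2 : ((X + 1) * f).comp (-X) = -((X - 1) * f.comp (-X)) := by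
    rw [mul_comp, add_comp, X_comp, one_comp]
    ring
  constructor
  · exact isodual_helper hn _ _ hg1 hg2 hprod hcomp1
  · exact isodual_helper hn _ _ hg2 hg1 (by rw [mul_comm]; exact hprod) hcomp2
end

section
/- Let q = p^b be a prime power and F_q the field with q elements, and suppose one of the following holds: (i) p = 2, (ii) p ≡ 1 (mod 4), or (iii) p ≡ 3 (mod 4) and b is even. Let l be an even positive integer and m a positive integer coprime to q. Then there exists a self-dual quasi-cyclic code of index l and length l·m over F_q: an F_q-submodule C of (ZMod (l·m) → F_q) such that C = C^⊥ and C is invariant under the shift T^l, i.e. for every v ∈ C the vector (fun i => v (i − l)) also lies in C. -/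
/-- Let `q = p^b` and suppose `p = 2`, or `p ≡ 1 (mod 4)`, or `p ≡ 3 (mod 4)` with `b`
even. Then for every even `l > 0` and every `m > 0` coprime to `q` there exists a
self-dual `l`-quasi-cyclic code of length `l·m` over the field with `q` elements. -/
theorem exists_selfDual_quasiCyclic
    (p b : ℕ) (hp : p.Prime) (hb : 0 < b)
    (F : Type) [Field F] [Fintype F] (hF : Fintype.card F = p ^ b)
    (hcond : p = 2 ∨ p % 4 = 1 ∨ (p % 4 = 3 ∧ Even b))
    (l m : ℕ) (hl : 0 < l) (hleven : Even l) (hm : 0 < m)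
    (hcop : Nat.Coprime m (p ^ b)) [NeZero (l * m)] :
    ∃ C : Submodule F (ZMod (l * m) → F),
      ((C : Set (ZMod (l * m) → F)) = {w | ∀ v ∈ C, ∑ i, v i * w i = 0}) ∧
      ∀ v ∈ C, (fun i => v (i - (l : ZMod (l * m)))) ∈ C := by
  classical
  -- Step 1: find `c` with `c * c = -1`.
  have hq3 : Fintype.card F % 4 ≠ 3 := by
    rw [hF]
    rcases hcond with h2 | h1 | ⟨h3, hbe⟩
    · subst h2
      have h : 2 ^ b % 2 = 0 := by
        rw [Nat.pow_mod]
        norm_num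
        rw [Nat.zero_pow hb]
      omega
    · have : p ^ b % 4 = 1 := by rw [Nat.pow_mod, h1, one_pow]; rfl
      omega
    · obtain ⟨t, ht⟩ := hbe
      have : p ^ b % 4 = 1 := by
        rw [Nat.pow_mod, h3, ht, pow_add, Nat.mul_mod]
        have h9 : 3 ^ t % 4 * (3 ^ t % 4) % 4 = 3 ^ t * 3 ^ t % 4 := by
          rw [← Nat.mul_mod]
        rw [h9, ← pow_add, ← two_mul, pow_mul]
        have h4 : (3 : ℕ) ^ 2 % 4 = 1 := by norm_num
        rw [Nat.pow_mod, h4, one_pow]; rfl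
      omega
  obtain ⟨c, hc⟩ : IsSquare (-1 : F) := FiniteField.isSquare_neg_one_iff.mpr hq3
  -- Step 2: arithmetic setup, `l = k + k`.
  obtain ⟨k, hk⟩ := hleven
  have hk0 : 0 < k := by omega
  have hkl : k < l := by omega
  have hln : l ≤ l * m := Nat.le_mul_of_pos_right l hm
  have hkn : k < l * m := lt_of_lt_of_le hkl hln
  have hkval : ((k : ℕ) : ZMod (l * m)).val = k := by
    rw [ZMod.val_natCast, Nat.mod_eq_of_lt hkn]
  -- value of `i + k` when the residue of `i` mod `l` is in the lower half
  have factA : ∀ i : ZMod (l * m), i.val % l < k →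
      (i + (k : ℕ)).val = i.val + k := by
    intro i hi
    have hd := Nat.div_add_mod i.val l
    have hvlt : i.val < l * m := ZMod.val_lt i
    have hdiv : i.val / l < m := (Nat.div_lt_iff_lt_mul hl).mpr (lt_of_lt_of_eq hvlt (mul_comm l m))
    have h2 : l * (i.val / l) ≤ l * (m - 1) := Nat.mul_le_mul_left l (by omega)
    have h3 : l * (m - 1) = l * m - l := by rw [Nat.mul_sub, Nat.mul_one]
    have hbound : i.val + k < l * m := by omega
    rw [ZMod.val_add, hkval, Nat.mod_eq_of_lt hbound]
  have factA' : ∀ i : ZMod (l * m), i.val % l < k →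
      (i + (k : ℕ)).val % l = i.val % l + k := by
    intro i hi
    have hd := Nat.div_add_mod i.val l
    rw [factA i hi]
    have h1 : i.val + k = l * (i.val / l) + (i.val % l + k) := by omega
    rw [h1, Nat.mul_add_mod, Nat.mod_eq_of_lt (by omega)]
  -- value of `i - k` when the residue of `i` mod `l` is in the upper half
  have factB : ∀ i : ZMod (l * m), k ≤ i.val % l →
      (i - (k : ℕ)).val = i.val - k := by
    intro i hi
    have hle : ((k : ℕ) : ZMod (l * m)).val ≤ i.val := by
      rw [hkval]; exact le_trans hi (Nat.mod_le _ _)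
    rw [ZMod.val_sub hle, hkval]
  have factB' : ∀ i : ZMod (l * m), k ≤ i.val % l →
      (i - (k : ℕ)).val % l = i.val % l - k := by
    intro i hi
    have hd := Nat.div_add_mod i.val l
    have hmod : i.val % l < l := Nat.mod_lt _ hl
    rw [factB i hi]
    have h1 : i.val - k = l * (i.val / l) + (i.val % l - k) := by omega
    rw [h1, Nat.mul_add_mod, Nat.mod_eq_of_lt (by omega)]
  -- shifting by `l` does not change the residue mod `l`
  have factC : ∀ i : ZMod (l * m), (i - (l : ZMod (l * m))).val % l = i.val % l := by
    have : NeZero l := ⟨hl.ne'⟩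
    intro i
    have hdvd : l ∣ l * m := Dvd.intro_left m (mul_comm m l)
    have key : ∀ a : ZMod (l * m),
        ((ZMod.castHom hdvd (ZMod l)) a).val = a.val % l := by
      intro a
      conv_lhs => rw [← ZMod.natCast_zmod_val a]
      rw [map_natCast, ZMod.val_natCast]
    have h1 : (ZMod.castHom hdvd (ZMod l)) (i - (l : ZMod (l * m)))
        = (ZMod.castHom hdvd (ZMod l)) i := by
      rw [map_sub]
      have : (ZMod.castHom hdvd (ZMod l)) ((l : ℕ) : ZMod (l * m)) = ((l : ℕ) : ZMod l) := by
        rw [map_natCast]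
      rw [this, ZMod.natCast_self, sub_zero]
    have := key (i - (l : ZMod (l * m)))
    rw [h1, key i] at this
    omega
  have hkne : ((k : ℕ) : ZMod (l * m)) ≠ 0 := by
    intro h
    have := hkval
    rw [h, ZMod.val_zero] at this
    omega
  -- Step 3: the code
  set n := l * m with hn
  refine ⟨{ carrier := {v | ∀ i : ZMod n, i.val % l < k → v (i + (k : ℕ)) = c * v i}
            add_mem' := by
              intro a b ha hb i hi
              simp only [Pi.add_apply, ha i hi, hb i hi]; ring
            zero_mem' := by intro i hi; simp
            smul_mem' := by
              intro r v hv i hi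
              simp only [Pi.smul_apply, smul_eq_mul, hv i hi]; ring }, ?_, ?_⟩
  · -- self-duality
    ext w
    simp only [Submodule.coe_set_mk, AddSubmonoid.coe_set_mk, AddSubsemigroup.coe_set_mk,
      Set.mem_setOf_eq, SetLike.mem_coe, Submodule.mem_mk, AddSubmonoid.mem_mk,
      AddSubsemigroup.mem_mk]
    constructor
    · -- `C ⊆ C^⊥`
      intro hw v hv
      refine Finset.sum_ninvolution
        (fun i => if i.val % l < k then i + (k : ℕ) else i - (k : ℕ)) ?_ ?_
        (fun i => Finset.mem_univ _) ?_
      · intro a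
        by_cases ha : a.val % l < k
        · rw [if_pos ha, hv a ha, hw a ha]
          linear_combination (-(v a * w a)) * hc
        · push_neg at ha
          rw [if_neg (not_lt.mpr ha)]
          have hj : (a - (k : ℕ)).val % l < k := by
            have := factB' a ha
            have hmod : a.val % l < l := Nat.mod_lt _ hl
            omega
          have hja : a - (k : ℕ) + (k : ℕ) = a := sub_add_cancel a _
          have h1 := hv _ hj
          have h2 := hw _ hj
          rw [hja] at h1 h2
          rw [h1, h2]
          linear_combination (-(v (a - (k : ℕ)) * w (a - (k : ℕ)))) * hc
      · intro a _
        by_cases ha : a.val % l < k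
        · rw [if_pos ha]
          intro h
          exact hkne (by rwa [add_eq_left] at h)
        · rw [if_neg ha]
          intro h
          exact hkne (by rwa [sub_eq_self] at h)
      · intro a
        by_cases ha : a.val % l < k
        · rw [if_pos ha, if_neg (by rw [factA' a ha]; omega), add_sub_cancel_right]
        · push_neg at ha
          have hj : (a - (k : ℕ)).val % l < k := by
            have := factB' a ha
            have hmod : a.val % l < l := Nat.mod_lt _ hl
            omega
          rw [if_neg (not_lt.mpr ha), if_pos hj, sub_add_cancel]
    · -- `C^⊥ ⊆ C`
      intro hw i hi
      set v : ZMod n → F :=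
        fun j => (if j = i then 1 else 0) + c * (if j = i + (k : ℕ) then 1 else 0) with hv
      have hvC : ∀ j : ZMod n, j.val % l < k → v (j + (k : ℕ)) = c * v j := by
        intro j hj
        have h1 : j + (k : ℕ) ≠ i := by
          intro h
          have := factA' j hj
          rw [h] at this
          omega
        have h3 : j ≠ i + (k : ℕ) := by
          intro h
          have := factA' i hi
          rw [← h] at this
          omega
        simp only [hv]
        rw [if_neg h1, if_neg h3]
        by_cases h : j = i
        · subst h
          rw [if_pos rfl, if_pos rfl]
          ring
        · rw [if_neg h, if_neg (fun hh => h (add_right_cancel hh))]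
          ring
      have hsum := hw v hvC
      have hexp : ∀ j : ZMod n, v j * w j
          = (if j = i then w j else 0) + c * (if j = i + (k : ℕ) then w j else 0) := by
        intro j
        simp only [hv]
        split_ifs <;> ring
      rw [Finset.sum_congr rfl (fun j _ => hexp j), Finset.sum_add_distrib,
        ← Finset.mul_sum, Finset.sum_ite_eq' Finset.univ i w,
        Finset.sum_ite_eq' Finset.univ (i + (k : ℕ)) w,
        if_pos (Finset.mem_univ _), if_pos (Finset.mem_univ _)] at hsum
      linear_combination (-c) * hsum + (- w (i + (k : ℕ))) * hc
  · -- quasi-cyclicity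
    intro v hv i hi
    simp only []
    have hml := factC i
    have h1 := hv (i - (l : ZMod n)) (by rw [hml]; exact hi)
    have h2 : i + (k : ℕ) - (l : ZMod n) = i - (l : ZMod n) + (k : ℕ) := by ring
    rw [h2, h1]
end

section
/- Let F_q be a finite field and m a positive integer coprime to q. Then there exists an isodual quasi-cyclic code of index 2 and length 2m over F_q: an F_q-submodule C of (ZMod (2m) → F_q) such that C is invariant under the shift T² (for every v ∈ C, the vector (fun i => v (i − 2)) lies in C) and C is monomially equivalent to its Euclidean dual C^⊥. -/
/-- For every finite field `F_q` and every `m > 0` coprime to `q` there exists an isodual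
quasi-cyclic code of index 2 and length `2m` over `F_q`: a code invariant under the
shift `T²` which is monomially equivalent to its Euclidean dual. -/
theorem exists_isodual_quasiCyclic_index_two
    (F : Type) [Field F] [Fintype F] (m : ℕ) (hm : 0 < m)
    (hcop : Nat.Coprime m (Fintype.card F)) [NeZero (2 * m)] :
    ∃ C : Submodule F (ZMod (2 * m) → F),
      (∀ v ∈ C, (fun i => v (i - 2)) ∈ C) ∧
      ∃ (σ : Equiv.Perm (ZMod (2 * m))) (d : ZMod (2 * m) → Fˣ),
        (fun v : ZMod (2 * m) → F => fun i : ZMod (2 * m) => (d i : F) * v (σ i)) ''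
            (C : Set (ZMod (2 * m) → F)) =
          {w : ZMod (2 * m) → F | ∀ v ∈ C, ∑ i, v i * w i = 0} := by
  classical
  -- key arithmetic facts
  have hmm : (m : ZMod (2 * m)) + (m : ZMod (2 * m)) = 0 := by
    rw [← Nat.cast_add, ← two_mul, ZMod.natCast_self]
  have hmne : (m : ZMod (2 * m)) ≠ 0 := by
    intro h
    have := (ZMod.natCast_eq_zero_iff m (2 * m)).mp h
    have := Nat.le_of_dvd hm this
    omega
  have hperiod : ∀ i : ZMod (2 * m), i + m + m = i := by
    intro i; rw [add_assoc, hmm, add_zero]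
  -- the code: periodic vectors with period m
  refine ⟨{ carrier := {v | ∀ i : ZMod (2 * m), v (i + m) = v i}
            add_mem' := by intro a b ha hb i; simp [ha i, hb i]
            zero_mem' := by intro i; simp
            smul_mem' := by intro c a ha i; simp [ha i] }, ?_, ?_⟩
  · -- quasi-cyclic (in fact cyclic)
    intro v hv i
    have hv' : ∀ j : ZMod (2 * m), v (j + m) = v j := hv
    show v (i + m - 2) = v (i - 2)
    have : i + m - 2 = (i - 2) + m := by ring
    rw [this, hv' (i - 2)]
  · -- isoduality
    refine ⟨Equiv.refl _, fun i => if (i : ZMod (2 * m)).val < m then 1 else -1, ?_⟩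
    set d : ZMod (2 * m) → Fˣ := fun i => if (i : ZMod (2 * m)).val < m then 1 else -1 with hd
    have hvalm : ((m : ℕ) : ZMod (2 * m)).val = m := by
      rw [ZMod.val_natCast]; exact Nat.mod_eq_of_lt (by omega)
    have hvaladd : ∀ i : ZMod (2 * m), (i + (m : ZMod (2 * m))).val =
        if i.val < m then i.val + m else i.val - m := by
      intro i
      have hlt : i.val < 2 * m := ZMod.val_lt i
      rw [ZMod.val_add, hvalm]
      split
      · exact Nat.mod_eq_of_lt (by omega)
      · have : i.val + m = (i.val - m) + (2 * m) := by omega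
        rw [this, Nat.add_mod_right]
        exact Nat.mod_eq_of_lt (by omega)
    have hdm : ∀ i : ZMod (2 * m), (d (i + m) : F) = -(d i : F) := by
      intro i
      have hlt : i.val < 2 * m := ZMod.val_lt i
      simp only [hd, hvaladd i]
      by_cases h : i.val < m
      · rw [if_pos h, if_neg (by omega : ¬ i.val + m < m), if_pos h]
        simp
      · rw [if_neg h, if_pos (by omega), if_neg h]
        simp
    have hdsq : ∀ i : ZMod (2 * m), (d i : F) * (d i : F) = 1 := by
      intro i
      simp only [hd]
      split <;> simp
    ext w
    simp only [Set.mem_image, SetLike.mem_coe, Set.mem_setOf_eq, Equiv.refl_apply]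
    constructor
    · rintro ⟨v, hv, rfl⟩ u hu
      -- u periodic, w i = d i * v i with v periodic; so the summand pairs to zero
      refine Finset.sum_ninvolution (fun i => i + (m : ZMod (2 * m))) ?_ ?_
        (fun i => Finset.mem_univ _) hperiod
      · intro i
        have hv' : v (i + m) = v i := hv i
        have hu' : u (i + m) = u i := hu i
        show u i * ((d i : F) * v i) + u (i + m) * ((d (i + m) : F) * v (i + m)) = 0
        rw [hv', hu', hdm i]
        ring
      · intro i _ h
        exact hmne (by have := hperiod i; linear_combination (norm := ring_nf) h - i + i)
    · intro hw
      -- first show w (i+m) = - w i for all i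
      have hkey : ∀ j : ZMod (2 * m), w (j + m) = -(w j) := by
        intro j
        have hjne : j + m ≠ j := by
          intro h
          exact hmne (by linear_combination h - j + j)
        set v : ZMod (2 * m) → F := fun i => if i = j ∨ i = j + m then 1 else 0 with hv
        have hvC : ∀ i : ZMod (2 * m), v (i + m) = v i := by
          intro i
          simp only [hv]
          congr 1
          simp only [eq_iff_iff]
          constructor
          · rintro (h | h)
            · right; rw [← h, hperiod]  -- i + m = j → i = j + m? fix below
            · left
              have := congrArg (· + (m : ZMod (2 * m))) h
              simpa [hperiod] using this
          · rintro (h | h)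
            · right; rw [h]
            · left; rw [h, hperiod]
        have hsum := hw v hvC
        have hsplit : ∀ i : ZMod (2 * m), v i * w i =
            (if i = j then w i else 0) + (if i = j + m then w i else 0) := by
          intro i
          simp only [hv]
          by_cases h1 : i = j <;> by_cases h2 : i = j + m <;> simp_all [hjne.symm]
        have : ∑ i : ZMod (2 * m), v i * w i = w j + w (j + m) := by
          rw [Finset.sum_congr rfl (fun i _ => hsplit i), Finset.sum_add_distrib,
            Finset.sum_ite_eq' Finset.univ j w, Finset.sum_ite_eq' Finset.univ (j + m) w]
          simp
        rw [this] at hsum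
        linear_combination hsum
      -- now produce the preimage
      refine ⟨fun i => (d i : F) * w i, ?_, ?_⟩
      · intro i
        show (d (i + m) : F) * w (i + m) = (d i : F) * w i
        rw [hdm i, hkey i]
        ring
      · funext i
        show (d i : F) * ((d i : F) * w i) = w i
        rw [← mul_assoc, hdsq i, one_mul]
end

section
/- Let q = p^b with p an odd prime, p ≡ 3 (mod 4) and b odd (equivalently q ≡ 3 mod 4), let F_q be the field with q elements, and let m be a positive integer coprime to q. Then there is no self-dual quasi-cyclic code of index 2 and length 2m over F_q: there exists no F_q-submodule C of (ZMod (2m) → F_q) with C = C^⊥ and such that for every v ∈ C the vector (fun i => v (i − 2)) lies in C. -/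
open Finset

private def phi (m : ℕ) : ZMod (2*m) →+* ZMod 2 := ZMod.castHom ⟨m, rfl⟩ (ZMod 2)

private lemma phi_val (m : ℕ) [NeZero (2*m)] (x : ZMod (2*m)) :
    phi m x = ((x.val : ℕ) : ZMod 2) := by
  rw [phi, ZMod.castHom_apply, ZMod.natCast_val]

private lemma phi_two_mul (m : ℕ) [NeZero (2*m)] (k : ℕ) :
    phi m (((2*k : ℕ) : ZMod (2*m))) = 0 := by
  rw [map_natCast]
  push_cast
  rw [show ((2:ZMod 2)) = 0 from rfl, zero_mul]

private def Ssum (m : ℕ) {F : Type} [AddCommMonoid F] [NeZero (2*m)]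
    (w : ZMod (2*m) → F) (ε : ZMod 2) : F :=
  ∑ i ∈ Finset.univ.filter (fun i => phi m i = ε), w i

private lemma key_sum (m : ℕ) [NeZero (2*m)] {F : Type} [AddCommMonoid F]
    (w : ZMod (2*m) → F) (i : ZMod (2*m)) :
    ∑ k ∈ Finset.range m, w (i - ((2*k : ℕ) : ZMod (2*m))) = Ssum m w (phi m i) := by
  unfold Ssum
  have h2m : 0 < 2*m := Nat.pos_of_ne_zero (NeZero.ne _)
  refine Finset.sum_nbij' (fun k => i - ((2*k : ℕ) : ZMod (2*m)))
    (fun j => (i - j).val / 2) ?_ ?_ ?_ ?_ ?_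
  · intro k _
    simp only [mem_filter, mem_univ, true_and]
    rw [map_sub, phi_two_mul, sub_zero]
  · intro j hj
    simp only [mem_filter, mem_univ, true_and] at hj
    have hdvd : 2 ∣ (i - j).val := by
      have : phi m (i - j) = 0 := by rw [map_sub, hj, sub_self]
      rw [phi_val] at this
      exact (ZMod.natCast_eq_zero_iff _ 2).mp this
    have hlt : (i - j).val < 2*m := ZMod.val_lt _
    simp only [mem_range]
    omega
  · intro k hk
    simp only [mem_range] at hk
    have h1 : ((2*k : ℕ) : ZMod (2*m)).val = 2*k := ZMod.val_cast_of_lt (by omega)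
    have h2 : (i - (i - ((2*k : ℕ) : ZMod (2*m)))) = ((2*k : ℕ) : ZMod (2*m)) := by ring
    show (i - (i - ((2*k : ℕ) : ZMod (2*m)))).val / 2 = k
    rw [h2, h1]
    omega
  · intro j hj
    simp only [mem_filter, mem_univ, true_and] at hj
    have hdvd : 2 ∣ (i - j).val := by
      have : phi m (i - j) = 0 := by rw [map_sub, hj, sub_self]
      rw [phi_val] at this
      exact (ZMod.natCast_eq_zero_iff _ 2).mp this
    have : ((2 * ((i - j).val / 2) : ℕ) : ZMod (2*m)) = i - j := by
      rw [Nat.mul_div_cancel' hdvd, ZMod.natCast_val, ZMod.cast_id]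
    show i - ((2 * ((i - j).val / 2) : ℕ) : ZMod (2*m)) = j
    rw [this]
    ring
  · intro k _
    rfl

private lemma pow_mod_four {p b : ℕ} (hp3 : p % 4 = 3) (hb : Odd b) : p ^ b % 4 = 3 := by
  obtain ⟨k, rfl⟩ := hb
  rw [Nat.pow_mod, hp3]
  have h9 : 3 ^ (2*k) % 4 = 1 := by
    rw [pow_mul, Nat.pow_mod]
    norm_num
  rw [pow_succ, Nat.mul_mod, h9]

/-- If `q = p^b` with `p ≡ 3 (mod 4)` prime and `b` odd (so `q ≡ 3 (mod 4)`), then for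
every `m > 0` coprime to `q` there is no self-dual quasi-cyclic code of index 2 and
length `2m` over the field `F_q` with `q` elements. -/
theorem no_selfDual_quasiCyclic_index_two
    (p b : ℕ) (hp : p.Prime) (hp3 : p % 4 = 3) (hb : Odd b)
    (F : Type) [Field F] [Fintype F] (hF : Fintype.card F = p ^ b)
    (m : ℕ) (hm : 0 < m) (hcop : Nat.Coprime m (p ^ b)) [NeZero (2 * m)] :
    ¬ ∃ C : Submodule F (ZMod (2 * m) → F),
        ((C : Set (ZMod (2 * m) → F)) = {w | ∀ v ∈ C, ∑ i, v i * w i = 0}) ∧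
        ∀ v ∈ C, (fun i => v (i - 2)) ∈ C := by
  rintro ⟨C, hC, hshift⟩
  classical
  have hb1 : 0 < b := hb.pos
  -- characteristic
  haveI hchar : CharP F p := by
    obtain ⟨r, hr⟩ := CharP.exists F
    haveI := hr
    have hrp : r.Prime := CharP.char_is_prime F r
    obtain ⟨c, -, hc⟩ := FiniteField.card F r
    have : p = r := by
      have hdvd : p ∣ r ^ (c : ℕ) := by
        rw [← hc, hF]
        exact dvd_pow_self p (by omega)
      exact (Nat.prime_dvd_prime_iff_eq hp hrp).mp (hp.dvd_of_dvd_pow hdvd)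
    rwa [this]
  have hmF : (m : F) ≠ 0 := by
    intro h0
    rw [CharP.cast_eq_zero_iff F p] at h0
    have hcp : Nat.Coprime p m :=
      Nat.Coprime.coprime_dvd_left (dvd_pow_self p (by omega)) hcop.symm
    exact (hp.coprime_iff_not_dvd.mp hcp) h0
  have hns : ¬ IsSquare (-1 : F) := by
    rw [FiniteField.isSquare_neg_one_iff, hF]
    simp [pow_mod_four hp3 hb]
  -- orthogonality
  have horth : ∀ v ∈ C, ∀ w ∈ C, ∑ i, v i * w i = 0 := by
    intro v hv w hw
    have hw' : w ∈ {w : ZMod (2*m) → F | ∀ v ∈ C, ∑ i, v i * w i = 0} := hC ▸ hw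
    exact hw' v hv
  -- iterated shifts stay in C
  have hshiftk : ∀ (k : ℕ), ∀ w ∈ C, (fun i => w (i - ((2*k : ℕ) : ZMod (2*m)))) ∈ C := by
    intro k
    induction k with
    | zero => intro w hw; simpa using hw
    | succ k ih =>
      intro w hw
      have h2 := ih _ (hshift w hw)
      have : (fun i => w (i - ((2*(k+1) : ℕ) : ZMod (2*m))))
          = (fun i => (fun j => w (j - 2)) (i - ((2*k : ℕ) : ZMod (2*m)))) := by
        funext i
        simp only []
        congr 1
        push_cast
        ring
      rw [this]
      exact h2
  have horthk : ∀ v ∈ C, ∀ w ∈ C, ∀ k : ℕ,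
      ∑ i, v i * w (i - ((2*k : ℕ) : ZMod (2*m))) = 0 :=
    fun v hv w hw k => horth v hv _ (hshiftk k w hw)
  -- the bilinear identity on fiber sums
  have hAB : ∀ v ∈ C, ∀ w ∈ C,
      Ssum m v 0 * Ssum m w 0 + Ssum m v 1 * Ssum m w 1 = 0 := by
    intro v hv w hw
    have h1 : ∑ k ∈ range m, ∑ i, v i * w (i - ((2*k : ℕ) : ZMod (2*m))) = 0 := by
      rw [Finset.sum_congr rfl (fun k _ => horthk v hv w hw k)]
      simp
    rw [Finset.sum_comm] at h1
    have h2 : ∀ i : ZMod (2*m),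
        ∑ k ∈ range m, v i * w (i - ((2*k : ℕ) : ZMod (2*m))) = v i * Ssum m w (phi m i) := by
      intro i
      rw [← Finset.mul_sum, key_sum]
    rw [Finset.sum_congr rfl (fun i _ => h2 i)] at h1
    have h3 : ∑ i, v i * Ssum m w (phi m i) = ∑ ε : ZMod 2, Ssum m v ε * Ssum m w ε := by
      rw [← Finset.sum_fiberwise univ (phi m) (fun i => v i * Ssum m w (phi m i))]
      refine Finset.sum_congr rfl fun ε _ => ?_
      unfold Ssum
      rw [Finset.sum_mul]
      refine Finset.sum_congr rfl fun i hi => ?_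
      rw [(Finset.mem_filter.mp hi).2]
    rw [h3] at h1
    exact (Fin.sum_univ_two (fun ε : ZMod 2 => Ssum m v ε * Ssum m w ε)).symm.trans h1
  by_cases hall : ∀ v ∈ C, ∀ ε, Ssum m v ε = 0
  · -- then the even-indicator vector lies in C, but its even-sum is m ≠ 0
    set e0 : ZMod (2*m) → F := fun i => if phi m i = 0 then 1 else 0 with he0
    have he0C : e0 ∈ C := by
      have hmem : e0 ∈ {w : ZMod (2*m) → F | ∀ v ∈ C, ∑ i, v i * w i = 0} := by
        intro v hv
        have : ∑ i, v i * e0 i = Ssum m v 0 := by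
          unfold Ssum
          rw [Finset.sum_filter]
          refine Finset.sum_congr rfl fun i _ => ?_
          by_cases h : phi m i = 0 <;> simp [he0, h]
        rw [this]
        exact hall v hv 0
      show e0 ∈ (C : Set (ZMod (2*m) → F))
      rw [hC]
      exact hmem
    have hm0 : Ssum m e0 0 = (m : F) := by
      have hk := key_sum m e0 (0 : ZMod (2*m))
      rw [map_zero] at hk
      rw [← hk]
      have hone : ∀ k ∈ range m, e0 ((0 : ZMod (2*m)) - ((2*k : ℕ) : ZMod (2*m))) = 1 := by
        intro k _
        have hφ : phi m ((0 : ZMod (2*m)) - ((2*k : ℕ) : ZMod (2*m))) = 0 := by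
          rw [map_sub, map_zero, phi_two_mul, sub_zero]
        simp only [he0]
        exact if_pos hφ
      rw [Finset.sum_congr rfl hone]
      simp
    have := hall e0 he0C 0
    rw [hm0] at this
    exact hmF this
  · push_neg at hall
    obtain ⟨v, hv, ε, hε⟩ := hall
    have hab := hAB v hv v hv
    set a := Ssum m v 0 with ha
    set b' := Ssum m v 1 with hb'
    have h01 : ∀ x : ZMod 2, x = 0 ∨ x = 1 := by decide
    have hboth : a ≠ 0 ∧ b' ≠ 0 := by
      rcases h01 ε with rfl | rfl
      · refine ⟨hε, fun h => hε ?_⟩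
        rw [h, mul_zero, add_zero] at hab
        exact mul_self_eq_zero.mp hab
      · refine ⟨fun h => hε ?_, hε⟩
        rw [h, mul_zero, zero_add] at hab
        exact mul_self_eq_zero.mp hab
    obtain ⟨ha0, hb0⟩ := hboth
    refine hns ⟨a * b'⁻¹, ?_⟩
    field_simp
    linear_combination -hab
end

section
/- Let F_q be a finite field with q elements and let g ∈ F_q[X] be a monic irreducible polynomial of degree 2k with k ≥ 1, nonzero constant coefficient, which is self-reciprocal (reverse(g) = g(0) · g). Let α denote the image of X in the field K = F_q[X]/(g) (AdjoinRoot g). Then the map c(Y) ↦ c(Y⁻¹) on K coincides with the q^k-power Frobenius: for every polynomial c ∈ F_q[Y], evaluating c at α⁻¹ gives the q^k-th power of the evaluation of c at α, i.e. aeval (α⁻¹) c = (aeval α c)^(q^k). -/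
open Polynomial

/-- For a monic irreducible self-reciprocal polynomial `g` of degree `2k` (`k ≥ 1`) with
nonzero constant coefficient over the finite field `F` with `q` elements, the conjugation
map `c(Y) ↦ c(Y⁻¹)` on `K = F[X]/(g)` coincides with the `q^k`-power Frobenius: for every
polynomial `c`, evaluating `c` at `α⁻¹` gives the `q^k`-th power of its evaluation at `α`,
where `α` is the root of `g` in `K`. -/
theorem aeval_inv_root_eq_frobenius_pow
    (F : Type) [Field F] [Fintype F] (q : ℕ) (hq : Fintype.card F = q)
    (g : Polynomial F) [hirr : Fact (Irreducible g)] (hmonic : g.Monic)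
    (k : ℕ) (hk : 1 ≤ k) (hdeg : g.natDegree = 2 * k)
    (h0 : g.coeff 0 ≠ 0)
    (hsr : g.reverse = Polynomial.C (g.coeff 0) * g) :
    ∀ c : Polynomial F,
      Polynomial.aeval (AdjoinRoot.root g)⁻¹ c =
        (Polynomial.aeval (AdjoinRoot.root g) c) ^ (q ^ k) := by
  classical
  have hgne : g ≠ 0 := hmonic.ne_zero
  set α : AdjoinRoot g := AdjoinRoot.root g with hαdef
  have haeval : Polynomial.aeval α g = 0 := by
    rw [Polynomial.aeval_def, AdjoinRoot.algebraMap_eq]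
    exact AdjoinRoot.eval₂_root g
  have hα0 : α ≠ 0 := by
    intro h
    apply h0
    have h2 : Polynomial.aeval (0 : AdjoinRoot g) g = 0 := h ▸ haeval
    rw [Polynomial.aeval_def, Polynomial.eval₂_at_zero] at h2
    exact (algebraMap F (AdjoinRoot g)).injective (by rw [h2, map_zero])
  haveI : Invertible α := invertibleOfNonzero hα0
  have hrootinv : Polynomial.aeval α⁻¹ g = 0 := by
    have h1 : Polynomial.eval₂ (algebraMap F (AdjoinRoot g)) (⅟α) (reverse g) = 0 :=
      (Polynomial.eval₂_reverse_eq_zero_iff _ _ _).mpr (by rw [← Polynomial.aeval_def]; exact haeval)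
    rw [hsr, Polynomial.eval₂_mul, Polynomial.eval₂_C] at h1
    have h2 := (mul_eq_zero.mp h1).resolve_left (by
      intro hc; exact h0 ((algebraMap F (AdjoinRoot g)).injective (by rw [hc, map_zero])))
    rw [Polynomial.aeval_def, ← invOf_eq_inv α]
    exact h2
  -- characteristic
  set p := ringChar F with hpdef
  haveI : CharP F p := ringChar.charP F
  obtain ⟨m, hpprime, hqm⟩ := FiniteField.card F p
  haveI : Fact p.Prime := ⟨hpprime⟩
  rw [hq] at hqm
  haveI : CharP (AdjoinRoot g) p :=
    charP_of_injective_algebraMap (algebraMap F (AdjoinRoot g)).injective p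
  have hq1 : 1 < q := hq ▸ Fintype.one_lt_card
  have hqpow : ∀ n : ℕ, q ^ n = p ^ (m * n) := fun n => by rw [hqm, ← pow_mul]
  have hFfix : ∀ (a : F) (n : ℕ), a ^ q ^ n = a := fun a n => by
    rw [← hq]; exact FiniteField.pow_card_pow n a
  -- Frobenius powers as algebra homs
  let Φ : ℕ → (AdjoinRoot g →ₐ[F] AdjoinRoot g) := fun n =>
    AlgHom.mk' (iterateFrobenius (AdjoinRoot g) p (m * n)) (fun c x => by
      have hc : (algebraMap F (AdjoinRoot g) c) ^ p ^ (m * n) = algebraMap F (AdjoinRoot g) c := by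
        rw [← map_pow, ← hqpow, hFfix]
      simp only [iterateFrobenius_def, Algebra.smul_def, mul_pow, hc])
  have hΦ : ∀ (n : ℕ) (x : AdjoinRoot g), Φ n x = x ^ q ^ n := fun n x => by
    show iterateFrobenius (AdjoinRoot g) p (m * n) x = x ^ q ^ n
    rw [iterateFrobenius_def, hqpow]
  -- finiteness and cardinality of K
  haveI : Module.Finite F (AdjoinRoot g) := (AdjoinRoot.powerBasis hgne).finite
  haveI : Finite (AdjoinRoot g) := Module.finite_of_finite F
  haveI : Fintype (AdjoinRoot g) := Fintype.ofFinite _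
  have hcardK : Fintype.card (AdjoinRoot g) = q ^ (2 * k) := by
    rw [Module.card_eq_pow_finrank (K := F), hq, (AdjoinRoot.powerBasis hgne).finrank]
    show q ^ g.natDegree = q ^ (2 * k)
    rw [hdeg]
  have hper : ∀ x : AdjoinRoot g, x ^ q ^ (2 * k) = x := fun x => by
    rw [← hcardK]; exact FiniteField.pow_card x
  -- no smaller exponent works
  have hcontr : ∀ d : ℕ, 0 < d → d < 2 * k → ¬ (∀ x : AdjoinRoot g, x ^ q ^ d = x) := by
    intro d hd0 hdlt hall
    have hP : (X ^ q ^ d - X : (AdjoinRoot g)[X]) ≠ 0 :=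
      FiniteField.X_pow_card_pow_sub_X_ne_zero _ hd0.ne' hq1
    have hdeg' : (X ^ q ^ d - X : (AdjoinRoot g)[X]).natDegree = q ^ d :=
      FiniteField.X_pow_card_pow_sub_X_natDegree_eq _ hd0.ne' hq1
    have hsub : Finset.univ ⊆ (X ^ q ^ d - X : (AdjoinRoot g)[X]).roots.toFinset := by
      intro x _
      rw [Multiset.mem_toFinset, Polynomial.mem_roots hP]
      simp [Polynomial.IsRoot, hall x]
    have h1 := Finset.card_le_card hsub
    rw [Finset.card_univ, hcardK] at h1
    have h2 : ((X ^ q ^ d - X : (AdjoinRoot g)[X]).roots.toFinset).card ≤ q ^ d := by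
      refine le_trans (Multiset.toFinset_card_le _) (le_trans (Polynomial.card_roots' _) ?_)
      rw [hdeg']
    have h3 := lt_of_le_of_lt (h1.trans h2) (Nat.pow_lt_pow_right hq1 hdlt)
    exact lt_irrefl _ h3
  -- distinctness of conjugates
  have hinj : ∀ i j, i < 2 * k → j < 2 * k → α ^ q ^ i = α ^ q ^ j → i = j := by
    intro i j hi hj hij
    by_contra hne
    wlog hlt : i < j generalizing i j
    · exact this j i hj hi hij.symm (Ne.symm hne) (by omega)
    have hd : α ^ q ^ (j - i) = α := by
      have h1 : (α ^ q ^ (j - i)) ^ q ^ i = α ^ q ^ i := by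
        rw [← pow_mul, ← pow_add, Nat.sub_add_cancel hlt.le]
        exact hij.symm
      have hinjf : Function.Injective (Φ i) := RingHom.injective ((Φ i) : AdjoinRoot g →+* AdjoinRoot g)
      apply hinjf
      rw [hΦ, hΦ, h1]
    have hΦeq : Φ (j - i) = Φ 0 :=
      AdjoinRoot.algHom_ext (by rw [hΦ, hΦ, pow_zero, pow_one]; exact hd)
    have hall : ∀ x : AdjoinRoot g, x ^ q ^ (j - i) = x := fun x => by
      have h4 := DFunLike.congr_fun hΦeq x
      rwa [hΦ, hΦ, pow_zero, pow_one] at h4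
    exact hcontr (j - i) (by omega) (by omega) hall
  -- all Frobenius powers of α are roots of g
  have hrootpow : ∀ i : ℕ, Polynomial.aeval (α ^ q ^ i) g = 0 := fun i => by
    rw [← hΦ i α, Polynomial.aeval_algHom_apply, haeval, map_zero]
  -- α⁻¹ is one of the conjugates
  have hT : ∃ i, i < 2 * k ∧ α ^ q ^ i = α⁻¹ := by
    have hmemR : ∀ x : AdjoinRoot g, Polynomial.aeval x g = 0 →
        x ∈ (g.aroots (AdjoinRoot g)).toFinset := fun x hx => by
      rw [Multiset.mem_toFinset, Polynomial.mem_aroots]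
      exact ⟨hgne, hx⟩
    set T : Finset (AdjoinRoot g) := (Finset.range (2 * k)).image (fun i => α ^ q ^ i) with hTdef
    have hTsub : T ⊆ (g.aroots (AdjoinRoot g)).toFinset := by
      intro x hx
      rw [hTdef, Finset.mem_image] at hx
      obtain ⟨i, _, rfl⟩ := hx
      exact hmemR _ (hrootpow i)
    have hTcard : T.card = 2 * k := by
      rw [hTdef, Finset.card_image_of_injOn, Finset.card_range]
      intro i hi j hj hij
      exact hinj i j (Finset.mem_range.mp hi) (Finset.mem_range.mp hj) hij
    have hRcard : (g.aroots (AdjoinRoot g)).toFinset.card ≤ 2 * k := by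
      calc (g.aroots (AdjoinRoot g)).toFinset.card
          ≤ Multiset.card (g.aroots (AdjoinRoot g)) := Multiset.toFinset_card_le _
        _ ≤ (g.map (algebraMap F (AdjoinRoot g))).natDegree := Polynomial.card_roots' _
        _ ≤ g.natDegree := Polynomial.natDegree_map_le
        _ = 2 * k := hdeg
    have hTR : T = (g.aroots (AdjoinRoot g)).toFinset :=
      Finset.eq_of_subset_of_card_le hTsub (hRcard.trans_eq hTcard.symm)
    have hinvR : α⁻¹ ∈ T := hTR ▸ hmemR _ hrootinv
    rw [hTdef, Finset.mem_image] at hinvR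
    obtain ⟨i, hi, hie⟩ := hinvR
    exact ⟨i, Finset.mem_range.mp hi, hie⟩
  obtain ⟨i, hi2k, hieq⟩ := hT
  -- pin down i = k
  have h2i : α ^ q ^ (2 * i) = α := by
    rw [two_mul, pow_add, pow_mul, hieq, inv_pow, hieq, inv_inv]
  have hcycle : ∀ (x : AdjoinRoot g) (a t : ℕ), x ^ q ^ (a + 2 * k * t) = x ^ q ^ a := by
    intro x a t
    induction t with
    | zero => rw [mul_zero, add_zero]
    | succ t ih =>
      rw [mul_add, mul_one, ← add_assoc, pow_add, pow_mul, hper, ih]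
  have hmod : α ^ q ^ (2 * i % (2 * k)) = α := by
    have h5 := hcycle α (2 * i % (2 * k)) (2 * i / (2 * k))
    rw [Nat.mod_add_div] at h5
    rw [← h5]
    exact h2i
  have hizero : 2 * i % (2 * k) = 0 := by
    have := hinj (2 * i % (2 * k)) 0
      (Nat.mod_lt _ (by omega)) (by omega)
      (by rw [hmod, pow_zero, pow_one])
    exact this
  have hdvd2 : 2 * k ∣ 2 * i := Nat.dvd_of_mod_eq_zero hizero
  have hik : i = 0 ∨ i = k := by
    obtain ⟨t, ht⟩ := hdvd2
    have hikt : i = k * t := by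
      rw [show 2 * k * t = 2 * (k * t) by ring] at ht
      omega
    have ht2 : t < 2 := by
      by_contra hge
      push_neg at hge
      have hkk : k * 2 ≤ k * t := Nat.mul_le_mul_left k hge
      omega
    interval_cases t
    · left; omega
    · right; omega
  have hkey : α ^ q ^ k = α⁻¹ := by
    rcases hik with h | h
    · exfalso
      rw [h, pow_zero, pow_one] at hieq
      have hsq : α ^ 2 = 1 := by
        rw [sq]
        nth_rewrite 2 [hieq]
        exact mul_inv_cancel₀ hα0
      have hα2 : Polynomial.aeval α ((X : Polynomial F) ^ 2 - 1) = 0 := by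
        rw [map_sub, map_pow, Polynomial.aeval_X, map_one, hsq, sub_self]
      have hmin : minpoly F α = g := by
        rw [hαdef, AdjoinRoot.minpoly_root hgne, hmonic.leadingCoeff, inv_one, map_one, mul_one]
      have hdvd : g ∣ ((X : Polynomial F) ^ 2 - 1) := hmin ▸ minpoly.dvd F α hα2
      have hfac : ((X : Polynomial F) ^ 2 - 1) = (X - 1) * (X + 1) := by ring
      have hprime : Prime g := hirr.out.prime
      rw [hfac] at hdvd
      have hle : g.natDegree ≤ 1 := by
        rcases hprime.2.2 _ _ hdvd with h' | h'
        · have hne : ((X : Polynomial F) - 1) ≠ 0 := by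
            rw [← Polynomial.C_1]
            exact Polynomial.X_sub_C_ne_zero 1
          have := Polynomial.natDegree_le_of_dvd h' hne
          rwa [← Polynomial.C_1, Polynomial.natDegree_X_sub_C] at this
        · have hne : ((X : Polynomial F) + 1) ≠ 0 := by
            rw [← Polynomial.C_1]
            exact Polynomial.X_add_C_ne_zero 1
          have := Polynomial.natDegree_le_of_dvd h' hne
          rwa [← Polynomial.C_1, Polynomial.natDegree_X_add_C] at this
      omega
    · rw [← h]
      exact hieq
  intro c
  rw [← hkey, ← hΦ k α, Polynomial.aeval_algHom_apply, hΦ]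
end
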